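/- arXiv:2304.00845 — 4 statements merged into one kernel-verified Lean document; each statement's English description precedes it below -/
import Mathlib

section
/- Let C be a cosilting R-module with torsionfree class F = Cogen(C), and let 0 → C1 → C0 → E(R) be a minimal left F-approximation sequence of an injective cogenerator E(R), with C0, C1 in Prod(C). Then Beta(F) = {}^{⊥0}C1, i.e. a module X satisfies 'every morphism X → F with F in F has torsionfree cokernel' if and only if Hom(X, C1) = 0. In particular, Beta(F) is a torsion class in R-Mod. -/
open CategoryTheory CategoryTheory.Limits

universe u

variable {R : Type u} [Ring R]

/-- `(𝒯, ℱ)` is a torsion pair. -/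
def IsTorsionPair (𝒯 ℱ : Set (ModuleCat.{u} R)) : Prop :=
  (∀ ⦃X Y : ModuleCat.{u} R⦄, X ∈ 𝒯 → Y ∈ ℱ → ∀ f : X ⟶ Y, f = 0) ∧
  (∀ M : ModuleCat.{u} R, ∃ (X Y : ModuleCat.{u} R) (_ : X ∈ 𝒯) (_ : Y ∈ ℱ)
      (i : X ⟶ M) (p : M ⟶ Y) (w : i ≫ p = 0), (ShortComplex.mk i p w).ShortExact)

/-- `Cogen C`: the modules embedding into a product of copies of `C`. -/
def Cogen (C : ModuleCat.{u} R) : Set (ModuleCat.{u} R) :=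
  {X | ∃ (s : Type u) (f : X ⟶ ModuleCat.of R (s → C)), Mono f}

/-- `Prod C`: the direct summands of products of copies of `C`. -/
def ProdCl (C : ModuleCat.{u} R) : Set (ModuleCat.{u} R) :=
  {X | ∃ (s : Type u) (f : X ⟶ ModuleCat.of R (s → C))
      (r : ModuleCat.of R (s → C) ⟶ X), f ≫ r = 𝟙 X}

/-- `C` is a cosilting module: there is an injective copresentation `ω : I₀ ⟶ I₁` of `C`
with `Cogen C = 𝒞_ω = { X | Hom(X, ω) is surjective }`. -/
def IsCosilting (C : ModuleCat.{u} R) : Prop :=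
  ∃ (I₀ I₁ : ModuleCat.{u} R) (_ : Injective I₀) (_ : Injective I₁)
    (ι : C ⟶ I₀) (ω : I₀ ⟶ I₁) (w : ι ≫ ω = 0),
    Mono ι ∧ (ShortComplex.mk ι ω w).Exact ∧
    Cogen C = {X | ∀ f : X ⟶ I₁, ∃ g : X ⟶ I₀, g ≫ ω = f}

/-- `E` is an injective cogenerator. -/
def IsInjectiveCogenerator (E : ModuleCat.{u} R) : Prop :=
  Injective E ∧ ∀ X : ModuleCat.{u} R, ∃ (s : Type u)
    (f : X ⟶ ModuleCat.of R (s → E)), Mono f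

/-- `Beta ℱ`: modules `X` such that every morphism from `X` to an object of `ℱ` has
cokernel in `ℱ`. -/
def Beta (ℱ : Set (ModuleCat.{u} R)) : Set (ModuleCat.{u} R) :=
  {X | ∀ ⦃F : ModuleCat.{u} R⦄, F ∈ ℱ → ∀ f : X ⟶ F, cokernel f ∈ ℱ}

/-- A module lies in `Cogen C` iff morphisms to `C` separate its elements. -/
lemma mem_cogen_iff_separates (C Y : ModuleCat.{u} R) :
    Y ∈ Cogen C ↔ ∀ y : Y, y ≠ 0 → ∃ φ : Y ⟶ C, φ y ≠ 0 := by
  constructor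
  · rintro ⟨s, f, hf⟩ y hy
    have hinj := (ModuleCat.mono_iff_injective f).1 hf
    have hfy : f y ≠ 0 := fun h => hy (hinj (by simpa using h))
    have : ∃ i : s, f y i ≠ 0 := by
      by_contra hc
      push_neg at hc
      exact hfy (funext hc)
    obtain ⟨i, hi⟩ := this
    exact ⟨f ≫ ModuleCat.ofHom (LinearMap.proj i), hi⟩
  · intro h
    refine ⟨(Y ⟶ C), ModuleCat.ofHom
      { toFun := fun y φ => φ y
        map_add' := fun a b => by ext φ; simp
        map_smul' := fun r a => by ext φ; simp }, ?_⟩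
    rw [ModuleCat.mono_iff_injective]
    rw [injective_iff_map_eq_zero]
    intro a ha
    by_contra hc
    obtain ⟨φ, hφ⟩ := h a hc
    exact hφ (congrFun ha φ)

/-- Let `C` be a cosilting module with torsionfree class `ℱ = Cogen C`, and let
`0 → C₁ → C₀ → E` be a minimal `ℱ`-approximation sequence of an injective cogenerator
`E`, with `C₀, C₁ ∈ Prod C`. Then `Beta ℱ = {}^{⊥₀} C₁`, i.e. `X ∈ Beta ℱ` iff
`Hom(X, C₁) = 0`; in particular `Beta ℱ` is a torsion class. -/
theorem Beta_eq_perp0_C1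
    (C E C₀ C₁ : ModuleCat.{u} R) (hC : IsCosilting C)
    (hE : IsInjectiveCogenerator E)
    (g : C₀ ⟶ E) (hC₀F : C₀ ∈ Cogen C)
    (happrox : ∀ F ∈ Cogen C, ∀ f : F ⟶ E, ∃ h : F ⟶ C₀, h ≫ g = f)
    (hmin : ∀ s : C₀ ⟶ C₀, s ≫ g = g → IsIso s)
    (j : C₁ ⟶ C₀) (hj : Mono j) (hw : j ≫ g = 0)
    (hker : (ShortComplex.mk j g hw).Exact)
    (hC₀ : C₀ ∈ ProdCl C) (hC₁ : C₁ ∈ ProdCl C) :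
    Beta (Cogen C) = {X | ∀ f : X ⟶ C₁, f = 0} ∧
      ∃ 𝒢 : Set (ModuleCat.{u} R), IsTorsionPair (Beta (Cogen C)) 𝒢 := by
  have h1 : Beta (Cogen C) = {X : ModuleCat.{u} R | ∀ f : X ⟶ C₁, f = 0} := by
    ext X
    constructor
    · -- X ∈ Beta ⟹ Hom(X, C₁) = 0, via minimality of the approximation
      intro hX f
      have hgw : (f ≫ j) ≫ g = 0 := by rw [Category.assoc, hw, comp_zero]
      obtain ⟨h, hh⟩ := happrox _ (hX hC₀F (f ≫ j)) (cokernel.desc (f ≫ j) g hgw)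
      have hcomp : (cokernel.π (f ≫ j) ≫ h) ≫ g = g := by
        rw [Category.assoc, hh, cokernel.π_desc]
      haveI := hmin _ hcomp
      haveI : Mono (cokernel.π (f ≫ j)) := mono_of_mono (cokernel.π (f ≫ j)) h
      have h0 : f ≫ j = 0 := by
        rw [← cancel_mono (cokernel.π (f ≫ j)), cokernel.condition, zero_comp]
      haveI := hj
      rw [← cancel_mono j, h0, zero_comp]
    · -- Hom(X, C₁) = 0 ⟹ X ∈ Beta
      intro hX F hF f
      rw [mem_cogen_iff_separates]
      intro y hy
      obtain ⟨s, m, hm⟩ := hE.2 (cokernel f)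
      have hinj := (ModuleCat.mono_iff_injective m).1 hm
      have hmy : m y ≠ 0 := fun h => hy (hinj (by simpa using h))
      have : ∃ i : s, m y i ≠ 0 := by
        by_contra hc; push_neg at hc; exact hmy (funext hc)
      obtain ⟨i, hi⟩ := this
      set ψ : cokernel f ⟶ E := m ≫ ModuleCat.ofHom (LinearMap.proj i) with hψ
      have hψy : ψ y ≠ 0 := hi
      obtain ⟨h, hh⟩ := happrox F hF (cokernel.π f ≫ ψ)
      have hfh : f ≫ h = 0 := by
        have hexact := (ShortComplex.moduleCat_exact_iff _).1 hker
        have hrange : ∀ x : X, ∃ c : C₁, j c = h (f x) := by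
          intro x
          apply hexact
          have : (f ≫ h ≫ g) x = 0 := by
            rw [hh, ← Category.assoc, cokernel.condition, zero_comp]
            rfl
          simpa using this
        have hjinj := (ModuleCat.mono_iff_injective j).1 hj
        set e := LinearEquiv.ofInjective j.hom hjinj with he
        have hrange' : ∀ x : X, h (f x) ∈ LinearMap.range j.hom := by
          intro x; obtain ⟨c, hc⟩ := hrange x; exact ⟨c, hc⟩
        set k : X ⟶ C₁ := ModuleCat.ofHom (
          e.symm.toLinearMap ∘ₗ LinearMap.codRestrict (LinearMap.range j.hom)
            (h.hom.comp f.hom) hrange') with hk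
        have hk0 : k = 0 := hX k
        ext x
        have : j (k x) = h (f x) := by
          have : e (e.symm ⟨h (f x), hrange' x⟩) = ⟨h (f x), hrange' x⟩ :=
            e.apply_symm_apply _
          have h2 : j (e.symm ⟨h (f x), hrange' x⟩) = h (f x) := congrArg Subtype.val this
          exact h2
        have hkx : k x = 0 := by rw [hk0]; rfl
        have h3 : h (f x) = 0 := by rw [← this, hkx, map_zero]
        simpa using h3
      set hbar := cokernel.desc f h hfh with hhbar
      have hg : hbar ≫ g = ψ := by
        rw [← cancel_epi (cokernel.π f), ← Category.assoc, cokernel.π_desc, hh]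
      have hbary : hbar y ≠ 0 := by
        intro h0
        apply hψy
        rw [← hg]
        show g (hbar y) = 0
        rw [h0, map_zero]
      obtain ⟨φ, hφ⟩ := (mem_cogen_iff_separates C C₀).1 hC₀F (hbar y) hbary
      exact ⟨hbar ≫ φ, hφ⟩
  refine ⟨h1, ?_⟩
  refine ⟨{Y | ∀ X ∈ Beta (Cogen C), ∀ f : X ⟶ Y, f = 0},
    fun X Y hX hY f => hY X hX f, ?_⟩
  intro M
  set S : Set (Submodule R ↑M) := {N | ∀ φ : N →ₗ[R] ↑C₁, φ = 0} with hS
  set t : Submodule R ↑M := sSup S with htdef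
  have ht : ∀ φ : t →ₗ[R] ↑C₁, φ = 0 := by
    intro φ
    have hub : t ≤ Submodule.map t.subtype (LinearMap.ker φ) := by
      refine le_trans (le_of_eq htdef) (sSup_le ?_)
      intro N hN x hx
      have hNt : N ≤ t := by rw [htdef]; exact le_sSup hN
      have hres : φ.comp (Submodule.inclusion hNt) = 0 := hN _
      have : φ ⟨x, hNt hx⟩ = 0 := by
        have := congrFun (congrArg DFunLike.coe hres) ⟨x, hx⟩
        exact this
      exact ⟨⟨x, hNt hx⟩, this, rfl⟩
    ext ⟨x, hx⟩
    obtain ⟨⟨z, hz⟩, hzk, hzx⟩ := hub hx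
    simp only [Submodule.subtype_apply] at hzx
    subst hzx
    exact hzk
  refine ⟨ModuleCat.of R ↥t, ModuleCat.of R (↑M ⧸ t), ?_, ?_,
    ModuleCat.ofHom t.subtype, ModuleCat.ofHom t.mkQ, ?_, ?_⟩
  · rw [h1]; exact fun f => ModuleCat.hom_ext (ht f.hom)
  · -- M ⧸ t lies in the torsionfree class of the pair
    intro Z hZ f
    rw [h1] at hZ
    set P : Submodule R ↑M := Submodule.comap t.mkQ (LinearMap.range f.hom) with hPdef
    have htP : t ≤ P := by
      intro x hx
      have h0 : t.mkQ x = 0 := (Submodule.Quotient.mk_eq_zero t).2 hx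
      simp only [hPdef, Submodule.mem_comap]
      refine ⟨0, ?_⟩
      rw [map_zero]
      exact h0.symm
    have hPS : P ∈ S := by
      intro φ
      set e : ↥P →ₗ[R] (↑M ⧸ t) := t.mkQ.comp P.subtype with hedef
      have hke : LinearMap.ker e ≤ LinearMap.ker φ := by
        rintro ⟨x, hxP⟩ hx
        have hxt : x ∈ t := by
          simpa [hedef, Submodule.Quotient.mk_eq_zero] using hx
        have hres : φ.comp (Submodule.inclusion htP) = 0 := ht _
        have := congrFun (congrArg DFunLike.coe hres) ⟨x, hxt⟩
        rw [LinearMap.mem_ker]; exact this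
      have hre : LinearMap.range e = LinearMap.range f.hom := by
        ext q
        constructor
        · rintro ⟨⟨x, hxP⟩, rfl⟩
          exact hxP
        · rintro ⟨z, rfl⟩
          obtain ⟨x, hx⟩ := Submodule.Quotient.mk_surjective t (f z)
          have hxP : x ∈ P := by
            simp only [hPdef, Submodule.mem_comap]
            exact ⟨z, hx.symm⟩
          exact ⟨⟨x, hxP⟩, hx⟩
      set φbar : (↥P ⧸ LinearMap.ker e) →ₗ[R] ↑C₁ := (LinearMap.ker e).liftQ φ hke with hφbar
      set ε := LinearMap.quotKerEquivRange e with hε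
      set cst : ↥(LinearMap.range f.hom) ≃ₗ[R] ↥(LinearMap.range e) :=
        LinearEquiv.ofEq _ _ hre.symm with hcst
      set χ : ↥Z →ₗ[R] ↑C₁ :=
        φbar ∘ₗ ε.symm.toLinearMap ∘ₗ cst.toLinearMap ∘ₗ f.hom.rangeRestrict with hχ
      have hχ0 : χ = 0 := congrArg ModuleCat.Hom.hom (hZ (ModuleCat.ofHom χ))
      ext x
      obtain ⟨z, hz⟩ : ∃ z : ↥Z, f z = e x := by
        have : e x ∈ LinearMap.range f.hom := hre ▸ ⟨x, rfl⟩
        obtain ⟨z, hz⟩ := this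
        exact ⟨z, hz⟩
      obtain ⟨x', hx'⟩ := Submodule.Quotient.mk_surjective (LinearMap.ker e)
        (ε.symm (cst (f.hom.rangeRestrict z)))
      have hεx' : e x' = f z := by
        have h1 : ε (Submodule.Quotient.mk x') = cst (f.hom.rangeRestrict z) := by
          rw [hx', LinearEquiv.apply_symm_apply]
        have h2 := congrArg Subtype.val h1
        simpa [hε, hcst, LinearMap.quotKerEquivRange] using h2
      have hdiff : x - x' ∈ LinearMap.ker e := by
        simp [LinearMap.mem_ker, map_sub, hεx', hz]
      have hφeq : φ x = φ x' := by
        have := hke hdiff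
        rw [LinearMap.mem_ker, map_sub, sub_eq_zero] at this
        exact this
      have hχz : χ z = φ x' := by
        simp only [hχ, LinearMap.comp_apply]
        show φbar (ε.symm (cst (f.hom.rangeRestrict z))) = φ x'
        rw [← hx']
        rfl
      rw [hφeq, ← hχz, hχ0]
      rfl
    have hPt : P ≤ t := by rw [htdef]; exact le_sSup hPS
    ext z
    obtain ⟨x, hx⟩ := Submodule.Quotient.mk_surjective t (f z)
    have hxP : x ∈ P := by
      simp only [hPdef, Submodule.mem_comap]
      exact ⟨z, hx.symm⟩
    have : f z = 0 := by
      rw [← hx]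
      exact (Submodule.Quotient.mk_eq_zero t).2 (hPt hxP)
    simpa using this
  · ext x
    show t.mkQ (t.subtype x) = 0
    simpa [Submodule.Quotient.mk_eq_zero] using x.2
  · haveI : Mono (ModuleCat.ofHom t.subtype) :=
      (ModuleCat.mono_iff_injective _).2 t.injective_subtype
    haveI : Epi (ModuleCat.ofHom t.mkQ) :=
      (ModuleCat.epi_iff_surjective _).2 t.mkQ_surjective
    exact { exact := by
              rw [ShortComplex.moduleCat_exact_iff]
              intro x₂ hx₂
              exact ⟨⟨x₂, (Submodule.Quotient.mk_eq_zero t).1 hx₂⟩, rfl⟩ }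
end

section
/- Let C be a cosilting R-module with associated torsion pair (T,F) = ({}^{⊥0}C, Cogen C) and approximation sequence 0 → C1 → C0 → E(R) as above. Then Alpha(T) = C_σ, where σ : I0 → I1 is a minimal injective copresentation of C0 and C_σ = { X | Hom(X,σ) is surjective }. Here Alpha(T) = { X | every morphism f : T → X with T in T has ker(f) in T }. -/
open CategoryTheory CategoryTheory.Limits

universe u

variable {R : Type u} [Ring R]

/-- `Alpha 𝒯`: objects `X` such that every morphism from an object of `𝒯` to `X` has
kernel in `𝒯`. -/
def Alpha (𝒯 : Set (ModuleCat.{u} R)) : Set (ModuleCat.{u} R) :=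
  {X | ∀ ⦃T : ModuleCat.{u} R⦄, T ∈ 𝒯 → ∀ f : T ⟶ X, kernel f ∈ 𝒯}

/-- `f` is an essential monomorphism. -/
def EssentialMono {X Y : ModuleCat.{u} R} (f : X ⟶ Y) : Prop :=
  Mono f ∧ ∀ ⦃Z : ModuleCat.{u} R⦄ (h : Y ⟶ Z), Mono (f ≫ h) → Mono h

/-! ### Auxiliary lemmas -/

lemma mem_range_of_cokernel_π_eq_zero {A B : ModuleCat.{u} R} (ι : A ⟶ B) (x : B)
    (hx : cokernel.π ι x = 0) : ∃ a, ι a = x := by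
  have h := ShortComplex.exact_of_g_is_cokernel
    (ShortComplex.mk ι (cokernel.π ι) (cokernel.condition ι)) (cokernelIsCokernel ι)
  exact (ShortComplex.moduleCat_exact_iff _).mp h x hx

def tors (C M : ModuleCat.{u} R) : Submodule R M := ⨅ f : (M ⟶ C), LinearMap.ker f.hom

lemma mem_tors {C M : ModuleCat.{u} R} {x : M} : x ∈ tors C M ↔ ∀ f : M ⟶ C, f x = 0 := by
  simp [tors, Submodule.mem_iInf, LinearMap.mem_ker]

def torsPi (C M : ModuleCat.{u} R) : M →ₗ[R] ((M ⟶ C) → C) :=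
  LinearMap.pi (fun f => f.hom)

lemma tors_le_ker (C M : ModuleCat.{u} R) : tors C M ≤ LinearMap.ker (torsPi C M) := by
  intro x hx
  simp only [LinearMap.mem_ker]
  funext f
  exact mem_tors.mp hx f

noncomputable def torsQmap (C M : ModuleCat.{u} R) :
    ModuleCat.of R (M ⧸ tors C M) ⟶ ModuleCat.of R ((M ⟶ C) → C) :=
  ModuleCat.ofHom ((tors C M).liftQ (torsPi C M) (tors_le_ker C M))

lemma torsQmap_mono (C M : ModuleCat.{u} R) : Mono (torsQmap C M) := by
  rw [ModuleCat.mono_iff_injective]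
  intro a b hab
  obtain ⟨x, rfl⟩ := Submodule.mkQ_surjective _ a
  obtain ⟨y, rfl⟩ := Submodule.mkQ_surjective _ b
  have hxy : torsPi C M x = torsPi C M y := hab
  rw [Submodule.mkQ_apply, Submodule.mkQ_apply, Submodule.Quotient.eq]
  rw [mem_tors]
  intro f
  have := congrFun hxy f
  simp only [torsPi, LinearMap.pi_apply] at this
  show f.hom (x - y) = 0
  simp [map_sub, this]

lemma torsQuot_mem_Cogen (C M : ModuleCat.{u} R) :
    ModuleCat.of R (M ⧸ tors C M) ∈ Cogen C :=
  ⟨(M ⟶ C), torsQmap C M, torsQmap_mono C M⟩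

/-- The torsion part is in the torsion class `⊥C` (key cosilting lemma). -/
lemma tors_torsion (C : ModuleCat.{u} R) (hC : IsCosilting C) (M : ModuleCat.{u} R) :
    ∀ h : ModuleCat.of R (tors C M) ⟶ C, h = 0 := by
  obtain ⟨J₀, J₁, hJ₀, hJ₁, ιC, ω, w, hmono, hexact, hcog⟩ := hC
  intro h
  have hιCinj : Function.Injective ιC := (ModuleCat.mono_iff_injective ιC).mp hmono
  let incl : ModuleCat.of R (tors C M) ⟶ M := ModuleCat.ofHom (tors C M).subtype
  have : Mono incl := (ModuleCat.mono_iff_injective incl).mpr (Submodule.injective_subtype _)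
  let H : M ⟶ J₀ := Injective.factorThru (h ≫ ιC) incl
  have hH : ∀ z : tors C M, H z = ιC (h z) := fun z =>
    ConcreteCategory.congr_hom (Injective.comp_factorThru (h ≫ ιC) incl) z
  have hvanish : tors C M ≤ LinearMap.ker ((H ≫ ω).hom) := by
    intro x hx
    have h1 : (H ≫ ω) x = ω (H x) := rfl
    rw [LinearMap.mem_ker, h1, hH ⟨x, hx⟩]
    exact ConcreteCategory.congr_hom w (h ⟨x, hx⟩)
  let Hbar : ModuleCat.of R (M ⧸ tors C M) ⟶ J₁ := ModuleCat.ofHom ((tors C M).liftQ _ hvanish)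
  obtain ⟨G, hG⟩ : ∃ G : ModuleCat.of R (M ⧸ tors C M) ⟶ J₀, G ≫ ω = Hbar := by
    have := torsQuot_mem_Cogen C M
    rw [hcog] at this
    exact this Hbar
  let D : M ⟶ J₀ := H - (ModuleCat.ofHom (tors C M).mkQ ≫ G : M ⟶ J₀)
  have hD : ∀ x : M, D x = H x - G ((tors C M).mkQ x) := fun x => rfl
  have hDω : ∀ x : M, ω (D x) = 0 := by
    intro x
    have h1 : ω (H x) = Hbar ((tors C M).mkQ x) := rfl
    have h2 : ω (G ((tors C M).mkQ x)) = Hbar ((tors C M).mkQ x) :=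
      ConcreteCategory.congr_hom hG ((tors C M).mkQ x)
    rw [hD, map_sub, h1, h2, sub_self]
  have hrange : ∀ x : M, D x ∈ LinearMap.range ιC.hom := by
    intro x
    obtain ⟨c, hc⟩ := (ShortComplex.moduleCat_exact_iff _).mp hexact (D x) (hDω x)
    exact ⟨c, hc⟩
  let eιC : C ≃ₗ[R] LinearMap.range ιC.hom := LinearEquiv.ofInjective _ hιCinj
  let φ : M ⟶ C := ModuleCat.ofHom ((eιC.symm : _ →ₗ[R] C).comp (LinearMap.codRestrict _ D.hom hrange))
  have key : ∀ y : LinearMap.range ιC.hom, ιC (eιC.symm y) = (y : J₀) := by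
    rintro ⟨-, ⟨c, rfl⟩⟩
    have h2 : eιC c = ⟨ιC c, ⟨c, rfl⟩⟩ := rfl
    rw [← h2, eιC.symm_apply_apply, h2]
  have hφ : ∀ x : M, ιC (φ x) = D x := fun x =>
    key (LinearMap.codRestrict _ D.hom hrange x)
  apply ModuleCat.hom_ext; apply LinearMap.ext
  rintro ⟨x, hx⟩
  show h ⟨x, hx⟩ = 0
  apply hιCinj
  rw [map_zero]
  have hmk : (tors C M).mkQ x = 0 := by
    rwa [Submodule.mkQ_apply, Submodule.Quotient.mk_eq_zero]
  have hDx : D x = 0 := by rw [← hφ x, mem_tors.mp hx φ, map_zero]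
  have hHx : H x = 0 := by
    have := hD x
    rw [hmk, map_zero, sub_zero] at this
    rw [← this, hDx]
  rw [← hH ⟨x, hx⟩]
  exact hHx

def projHom {s : Type u} (Cc : ModuleCat.{u} R) (s₀ : s) :
    ModuleCat.of R (s → Cc) ⟶ Cc := ModuleCat.ofHom (LinearMap.proj s₀)

noncomputable def factorRange {M A B : ModuleCat.{u} R} (ι : A ⟶ B)
    (hinj : Function.Injective ι) (D : M ⟶ B)
    (hr : ∀ x : M, D x ∈ LinearMap.range ι.hom) : M ⟶ A :=
  ModuleCat.ofHom ((((LinearEquiv.ofInjective ι.hom hinj).symm :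
      LinearMap.range ι.hom →ₗ[R] A)).comp
    (LinearMap.codRestrict _ D.hom hr))

lemma factorRange_spec {M A B : ModuleCat.{u} R} (ι : A ⟶ B)
    (hinj : Function.Injective ι) (D : M ⟶ B)
    (hr : ∀ x : M, D x ∈ LinearMap.range ι.hom) (x : M) :
    ι (factorRange ι hinj D hr x) = D x := by
  set eι := LinearEquiv.ofInjective ι.hom hinj
  have key : ∀ y : LinearMap.range ι.hom, ι (eι.symm y) = (y : B) := by
    rintro ⟨-, ⟨c, rfl⟩⟩
    have h2 : eι c = ⟨ι c, ⟨c, rfl⟩⟩ := rfl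
    rw [← h2, eι.symm_apply_apply, h2]
  exact key (LinearMap.codRestrict _ D.hom hr x)

lemma zero_into_cogen {T A Cc : ModuleCat.{u} R} (hT : ∀ f : T ⟶ Cc, f = 0)
    (hA : A ∈ Cogen Cc) (φ : T ⟶ A) : φ = 0 := by
  obtain ⟨s, m, hm⟩ := hA
  have hminj := (ModuleCat.mono_iff_injective m).mp hm
  apply ModuleCat.hom_ext; apply LinearMap.ext; intro x
  show φ x = 0
  apply hminj
  rw [map_zero]
  funext s₀
  have h1 : (φ ≫ m ≫ projHom Cc s₀ : T ⟶ Cc) = 0 := hT _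
  exact ConcreteCategory.congr_hom h1 x

lemma prodcl_sub_cogen {Cc A : ModuleCat.{u} R} (hA : A ∈ ProdCl Cc) : A ∈ Cogen Cc := by
  obtain ⟨s, f, r, hfr⟩ := hA
  refine ⟨s, f, ?_⟩
  rw [ModuleCat.mono_iff_injective]
  intro a b hab
  have h2 := congrArg r hab
  have h1 : ∀ y, r (f y) = y := fun y => ConcreteCategory.congr_hom hfr y
  rwa [h1, h1] at h2

lemma self_mem_cogen (Cc : ModuleCat.{u} R) : Cc ∈ Cogen Cc := by
  refine ⟨PUnit, ModuleCat.ofHom (LinearMap.pi (fun _ => LinearMap.id)), ?_⟩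
  rw [ModuleCat.mono_iff_injective]
  intro a b hab
  exact congrFun hab PUnit.unit

lemma cogen_trans {Cc E C₀ : ModuleCat.{u} R} (hE : IsInjectiveCogenerator E)
    (g : C₀ ⟶ E) (happrox : ∀ F ∈ Cogen Cc, ∀ f : F ⟶ E, ∃ h : F ⟶ C₀, h ≫ g = f)
    {A : ModuleCat.{u} R} (hA : A ∈ Cogen Cc) : A ∈ Cogen C₀ := by
  obtain ⟨s, fE, hfE⟩ := hE.2 A
  have hfEinj := (ModuleCat.mono_iff_injective fE).mp hfE
  choose hh hhg using fun s₀ : s => happrox A hA (fE ≫ projHom E s₀)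
  refine ⟨s, ModuleCat.ofHom (LinearMap.pi (fun s₀ => (hh s₀).hom)), ?_⟩
  rw [ModuleCat.mono_iff_injective]
  intro a b hab
  apply hfEinj
  funext s₀
  have h2 : ∀ y, g (hh s₀ y) = fE y s₀ := fun y =>
    ConcreteCategory.congr_hom (hhg s₀) y
  have h3 : hh s₀ a = hh s₀ b := congrFun hab s₀
  have h4 := congrArg g h3
  rwa [h2, h2] at h4

/-- Let `C` be a cosilting module with torsion class `𝒯 = {}^{⊥₀}C` and approximation
sequence `0 → C₁ → C₀ → E`.  If `σ : I₀ ⟶ I₁` is a minimal injective copresentation of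
`C₀`, then `Alpha 𝒯 = 𝒞_σ = { X | Hom(X, σ) is surjective }`. -/
theorem Alpha_eq_C_sigma
    (C E C₀ C₁ : ModuleCat.{u} R) (hC : IsCosilting C)
    (hE : IsInjectiveCogenerator E)
    (g : C₀ ⟶ E) (hC₀F : C₀ ∈ Cogen C)
    (happrox : ∀ F ∈ Cogen C, ∀ f : F ⟶ E, ∃ h : F ⟶ C₀, h ≫ g = f)
    (hmin : ∀ s : C₀ ⟶ C₀, s ≫ g = g → IsIso s)
    (j : C₁ ⟶ C₀) (hj : Mono j) (hw : j ≫ g = 0)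
    (hker : (ShortComplex.mk j g hw).Exact)
    (hC₀ : C₀ ∈ ProdCl C) (hC₁ : C₁ ∈ ProdCl C)
    -- minimal injective copresentation `σ : I₀ ⟶ I₁` of `C₀`
    (I₀ I₁ : ModuleCat.{u} R) (hI₀ : Injective I₀) (hI₁ : Injective I₁)
    (ι : C₀ ⟶ I₀) (hι : EssentialMono ι)
    (e : cokernel ι ⟶ I₁) (he : EssentialMono e) :
    Alpha {M | ∀ f : M ⟶ C, f = 0} =
      {X | ∀ f : X ⟶ I₁, ∃ h : X ⟶ I₀, h ≫ (cokernel.π ι ≫ e) = f} := by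
  obtain ⟨hιmono, hιess⟩ := hι
  obtain ⟨hemono, heess⟩ := he
  have hιinj : Function.Injective ι := (ModuleCat.mono_iff_injective ι).mp hιmono
  have heinj : Function.Injective e := (ModuleCat.mono_iff_injective e).mp hemono
  set σ : I₀ ⟶ I₁ := cokernel.π ι ≫ e with hσdef
  have hσι : ∀ c : C₀, σ (ι c) = 0 := by
    intro c
    have h0 : (ι ≫ cokernel.π ι) c = 0 := by
      rw [cokernel.condition]; rfl
    show e ((cokernel.π ι) (ι c)) = 0
    rw [show (cokernel.π ι) (ι c) = 0 from h0, map_zero]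
  have hCmemC₀ : C ∈ Cogen C₀ := cogen_trans hE g happrox (self_mem_cogen C)
  apply Set.eq_of_subset_of_subset
  · -- Alpha ⊆ 𝒞_σ
    intro X hX
    intro u
    haveI := hE.1
    -- the pullback `W` of `u : X ⟶ I₁` and `σ : I₀ ⟶ I₁`
    set Wsub : Submodule R (↑X × ↑I₀) :=
      LinearMap.ker (u.hom.comp (LinearMap.fst R X I₀)
        - σ.hom.comp (LinearMap.snd R X I₀)) with hWsub
    have memW : ∀ p : ↑X × ↑I₀, p ∈ Wsub ↔ u p.1 = σ p.2 := by
      intro p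
      rw [hWsub, LinearMap.mem_ker, LinearMap.sub_apply]
      constructor
      · intro hp; exact sub_eq_zero.mp hp
      · intro hp; exact sub_eq_zero.mpr hp
    set 𝕎 : ModuleCat.{u} R := ModuleCat.of R Wsub with h𝕎
    let prX : 𝕎 ⟶ X := ModuleCat.ofHom ((LinearMap.fst R X I₀).comp Wsub.subtype)
    set t𝕎 : Submodule R 𝕎 := tors C 𝕎 with ht𝕎
    let tmod : ModuleCat.{u} R := ModuleCat.of R t𝕎
    let finc : tmod ⟶ X := ModuleCat.ofHom (prX.hom.comp t𝕎.subtype)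
    have htmod : tmod ∈ {M : ModuleCat.{u} R | ∀ f : M ⟶ C, f = 0} := by
      intro f0
      exact tors_torsion C hC 𝕎 f0
    have hkerT := hX htmod finc
    simp only [Set.mem_setOf_eq] at hkerT
    -- any torsion element of `W` with zero `X`-component is zero
    have key4 : ∀ w : 𝕎, w ∈ t𝕎 → prX w = 0 → w = 0 := by
      intro w hw hpr
      have hf0 : finc (⟨w, hw⟩ : t𝕎) = 0 := hpr
      set z : (kernel finc : ModuleCat.{u} R) :=
        (ModuleCat.kernelIsoKer finc).inv (⟨⟨w, hw⟩, hf0⟩ : LinearMap.ker finc.hom) with hzdef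
      have hz : kernel.ι finc z = ⟨w, hw⟩ :=
        ConcreteCategory.congr_hom (ModuleCat.kernelIsoKer_inv_kernel_ι finc)
          (⟨⟨w, hw⟩, hf0⟩ : LinearMap.ker finc.hom)
      let map0 : (kernel finc : ModuleCat.{u} R) ⟶ I₀ :=
        ModuleCat.ofHom (((LinearMap.snd R X I₀).comp (Wsub.subtype.comp t𝕎.subtype)).comp
          (kernel.ι finc).hom)
      have hmap0 : ∀ y, map0 y = (Wsub.subtype (t𝕎.subtype (kernel.ι finc y))).2 :=
        fun y => rfl
      have hmap0r : ∀ y, map0 y ∈ LinearMap.range ι.hom := by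
        intro y
        have hy0 : finc (kernel.ι finc y) = 0 :=
          ConcreteCategory.congr_hom (kernel.condition finc) y
        set w' : 𝕎 := t𝕎.subtype (kernel.ι finc y) with hw'
        have hw1 : (Wsub.subtype w').1 = 0 := hy0
        have hw2 : u (Wsub.subtype w').1 = σ ((Wsub.subtype w').2) := (memW _).mp w'.2
        rw [hw1, map_zero] at hw2
        have h3 : cokernel.π ι ((Wsub.subtype w').2) = 0 := by
          apply heinj
          rw [map_zero]
          exact hw2.symm
        obtain ⟨c, hc⟩ := mem_range_of_cokernel_π_eq_zero ι _ h3
        exact ⟨c, by rw [hmap0]; exact hc⟩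
      let ν : (kernel finc : ModuleCat.{u} R) ⟶ C₀ := factorRange ι hιinj map0 hmap0r
      have hν0 : ν z = 0 := by
        obtain ⟨s, m, hm⟩ := hC₀F
        have hminj := (ModuleCat.mono_iff_injective m).mp hm
        apply hminj
        rw [map_zero]
        funext s₀
        have h1 : (ν ≫ m ≫ projHom C s₀ : (kernel finc : ModuleCat.{u} R) ⟶ C) = 0 :=
          hkerT _
        exact ConcreteCategory.congr_hom h1 z
      have h5 : map0 z = 0 := by
        rw [← factorRange_spec ι hιinj map0 hmap0r z]
        show ι (ν z) = 0
        rw [hν0, map_zero]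
      rw [hmap0, hz] at h5
      -- now (↑w).2 = 0 and (↑w).1 = 0
      apply Subtype.ext
      apply Prod.ext
      · exact hpr
      · exact h5
    -- the canonical copy of C₀ inside W
    have hj0 : ∀ c : C₀, ((0 : X), ι c) ∈ Wsub := by
      intro c
      rw [memW]
      show u 0 = σ (ι c)
      rw [map_zero, hσι]
    let ι𝕎 : C₀ ⟶ 𝕎 :=
      ModuleCat.ofHom (LinearMap.codRestrict Wsub ((LinearMap.inr R X I₀).comp ι.hom)
        (fun c => hj0 c))
    have hι𝕎val : ∀ c, (Wsub.subtype (ι𝕎 c)) = ((0 : X), ι c) := fun c => rfl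
    let μ : C₀ ⟶ ModuleCat.of R (𝕎 ⧸ t𝕎) := ModuleCat.ofHom ((t𝕎.mkQ).comp ι𝕎.hom)
    have hμmono : Mono μ := by
      rw [ModuleCat.mono_iff_injective]
      intro a b hab
      have h1 : μ (a - b) = 0 := by
        rw [map_sub]
        rw [show μ a = μ b from hab, sub_self]
      have h2 : ι𝕎 (a - b) ∈ t𝕎 := by
        rwa [show μ (a-b) = Submodule.Quotient.mk (ι𝕎 (a-b)) from rfl,
          Submodule.Quotient.mk_eq_zero] at h1
      have h3 : prX (ι𝕎 (a - b)) = 0 := rfl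
      have h4 := key4 _ h2 h3
      have h5 : ι (a - b) = 0 := by
        have := congrArg (fun w : 𝕎 => (Wsub.subtype w).2) h4
        simp only [hι𝕎val] at this
        simpa using this
      have h6 := hιinj (show ι (a - b) = ι 0 by rw [h5, map_zero])
      exact sub_eq_zero.mp h6
    have hQcog : ModuleCat.of R (𝕎 ⧸ t𝕎) ∈ Cogen C := torsQuot_mem_Cogen C 𝕎
    let G : ModuleCat.of R (𝕎 ⧸ t𝕎) ⟶ E := Injective.factorThru g μ
    obtain ⟨h', hh'⟩ := happrox _ hQcog G
    have hiso : IsIso (μ ≫ h') := by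
      apply hmin
      rw [Category.assoc, hh']
      exact Injective.comp_factorThru g μ
    let r : ModuleCat.of R (𝕎 ⧸ t𝕎) ⟶ C₀ := h' ≫ inv (μ ≫ h')
    have hμr : ∀ c, r (μ c) = c := by
      intro c
      have h1 : μ ≫ r = 𝟙 C₀ := by
        rw [show μ ≫ r = (μ ≫ h') ≫ inv (μ ≫ h') from (Category.assoc _ _ _).symm,
          IsIso.hom_inv_id]
      exact ConcreteCategory.congr_hom h1 c
    let ρ : 𝕎 ⟶ C₀ := ModuleCat.ofHom (r.hom.comp t𝕎.mkQ)
    have hρι𝕎 : ∀ c, ρ (ι𝕎 c) = c := fun c => hμr c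
    let snd𝕎 : 𝕎 ⟶ I₀ := ModuleCat.ofHom ((LinearMap.snd R X I₀).comp Wsub.subtype)
    let θ : 𝕎 ⟶ I₀ := snd𝕎 - (ρ ≫ ι)
    have hθ : ∀ w2 : 𝕎, θ w2 = (Wsub.subtype w2).2 - ι (ρ w2) := fun _ => rfl
    have hkerθ : LinearMap.ker prX.hom ≤ LinearMap.ker θ.hom := by
      intro w2 hw2
      rw [LinearMap.mem_ker] at hw2 ⊢
      have h1 : (Wsub.subtype w2).1 = (0 : X) := hw2
      have h2' := (memW (Wsub.subtype w2)).mp w2.2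
      rw [h1, map_zero] at h2'
      have h3 : cokernel.π ι ((Wsub.subtype w2).2) = 0 := by
        apply heinj; rw [map_zero]; exact h2'.symm
      obtain ⟨c, hc⟩ := mem_range_of_cokernel_π_eq_zero ι _ h3
      have h4 : w2 = ι𝕎 c := by
        apply Subtype.ext
        apply Prod.ext
        · exact h1
        · exact hc.symm
      rw [hθ, h4, hρι𝕎]
      show ι c - ι c = 0
      rw [sub_self]
    let Q2 : ModuleCat.{u} R := ModuleCat.of R (𝕎 ⧸ LinearMap.ker prX.hom)
    let prXbar : Q2 ⟶ X := ModuleCat.ofHom ((LinearMap.ker prX.hom).liftQ prX.hom le_rfl)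
    have hprXbar : Mono prXbar := by
      rw [ModuleCat.mono_iff_injective]
      intro a b hab
      obtain ⟨x, rfl⟩ := Submodule.mkQ_surjective _ a
      obtain ⟨y, rfl⟩ := Submodule.mkQ_surjective _ b
      have hxy : prX x = prX y := hab
      rw [Submodule.mkQ_apply, Submodule.mkQ_apply, Submodule.Quotient.eq]
      rw [LinearMap.mem_ker, map_sub, hxy, sub_self]
    let θbar : Q2 ⟶ I₀ := ModuleCat.ofHom ((LinearMap.ker prX.hom).liftQ θ.hom hkerθ)
    let Λ : X ⟶ I₀ := Injective.factorThru θbar prXbar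
    have hΛ : ∀ w2 : 𝕎, Λ (prX w2) = θ w2 := by
      intro w2
      exact ConcreteCategory.congr_hom (Injective.comp_factorThru θbar prXbar)
        ((LinearMap.ker prX.hom).mkQ w2)
    let u₀ : X ⟶ I₁ := u - (Λ ≫ σ)
    have hu₀ : ∀ x, u₀ x = u x - σ (Λ x) := fun x => rfl
    have hclaim : ∀ (x : X) (k : (cokernel ι : ModuleCat.{u} R)), u₀ x = e k → u₀ x = 0 := by
      intro x k hk
      have hπs := (ModuleCat.epi_iff_surjective (cokernel.π ι)).mp inferInstance
      obtain ⟨i, hi⟩ := hπs (k + cokernel.π ι (Λ x))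
      have hxi : u x = σ i := by
        show u x = e (cokernel.π ι i)
        rw [hi, map_add]
        have h1 : e (cokernel.π ι (Λ x)) = σ (Λ x) := rfl
        rw [h1, ← hk, hu₀]
        abel
      let w2 : 𝕎 := ⟨(x, i), (memW _).mpr hxi⟩
      have hprw : prX w2 = x := rfl
      have hθw : Λ x = θ w2 := by rw [← hprw, hΛ]
      have h2 : σ (Λ x) = u x := by
        rw [hθw, hθ, map_sub]
        have h3 : σ (ι (ρ w2)) = 0 := hσι _
        rw [h3, sub_zero]
        exact hxi.symm
      rw [hu₀, h2, sub_self]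
    let q' : I₁ ⟶ ModuleCat.of R (I₁ ⧸ LinearMap.range u₀.hom) :=
      ModuleCat.ofHom (LinearMap.range u₀.hom).mkQ
    have hq'mono : Mono (e ≫ q') := by
      rw [ModuleCat.mono_iff_injective]
      intro a b hab
      have h1 : q' (e (a - b)) = 0 := by
        rw [map_sub, map_sub]
        exact sub_eq_zero.mpr hab
      have h2 : e (a - b) ∈ LinearMap.range u₀.hom := by
        rwa [show q' (e (a-b)) = Submodule.Quotient.mk (e (a-b)) from rfl,
          Submodule.Quotient.mk_eq_zero] at h1
      obtain ⟨x, hx⟩ := h2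
      have h3 : u₀ x = 0 := hclaim x (a - b) hx
      have h4 : e (a - b) = 0 := by rw [← hx, h3]
      have h6 := heinj (show e (a - b) = e 0 by rw [h4, map_zero])
      exact sub_eq_zero.mp h6
    have hq' : Mono q' := heess q' hq'mono
    have hq'inj := (ModuleCat.mono_iff_injective q').mp hq'
    have hu₀0 : ∀ x, u₀ x = 0 := by
      intro x
      apply hq'inj
      rw [map_zero]
      rw [show q' (u₀ x) = Submodule.Quotient.mk (u₀ x) from rfl,
        Submodule.Quotient.mk_eq_zero]
      exact ⟨x, rfl⟩
    refine ⟨Λ, ?_⟩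
    apply ModuleCat.hom_ext; apply LinearMap.ext; intro x
    show σ (Λ x) = u x
    have h7 := hu₀ x
    rw [hu₀0 x] at h7
    exact (sub_eq_zero.mp h7.symm).symm
  · -- 𝒞_σ ⊆ Alpha
    intro X hX
    simp only [Set.mem_setOf_eq] at hX
    intro T hT f
    simp only [Set.mem_setOf_eq] at hT ⊢
    have hNC₀ : ∀ h : (kernel f : ModuleCat.{u} R) ⟶ C₀, h = 0 := by
      intro h
      let H : T ⟶ I₀ := Injective.factorThru (h ≫ ι) (kernel.ι f)
      have hH : ∀ z, H (kernel.ι f z) = ι (h z) := fun z =>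
        ConcreteCategory.congr_hom (Injective.comp_factorThru (h ≫ ι) (kernel.ι f)) z
      have hv : LinearMap.ker f.hom ≤ LinearMap.ker ((H ≫ σ).hom) := by
        intro t ht
        rw [LinearMap.mem_ker] at ht ⊢
        have hz : kernel.ι f ((ModuleCat.kernelIsoKer f).inv (⟨t, ht⟩ : LinearMap.ker f.hom)) = t :=
          ConcreteCategory.congr_hom (ModuleCat.kernelIsoKer_inv_kernel_ι f) (⟨t, ht⟩ : LinearMap.ker f.hom)
        show σ (H t) = 0
        rw [← hz, hH, hσι]
      let Q := ModuleCat.of R (T ⧸ LinearMap.ker f.hom)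
      let fbar : Q ⟶ X := ModuleCat.ofHom ((LinearMap.ker f.hom).liftQ f.hom le_rfl)
      have hfbar : Mono fbar := by
        rw [ModuleCat.mono_iff_injective]
        intro a b hab
        obtain ⟨x, rfl⟩ := Submodule.mkQ_surjective _ a
        obtain ⟨y, rfl⟩ := Submodule.mkQ_surjective _ b
        have hxy : f x = f y := hab
        rw [Submodule.mkQ_apply, Submodule.mkQ_apply, Submodule.Quotient.eq]
        rw [LinearMap.mem_ker, map_sub, hxy, sub_self]
      let Hσbar : Q ⟶ I₁ := ModuleCat.ofHom ((LinearMap.ker f.hom).liftQ (H ≫ σ).hom hv)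
      let u : X ⟶ I₁ := Injective.factorThru Hσbar fbar
      have hu : ∀ t : T, u (f t) = σ (H t) := by
        intro t
        have h2 : u (fbar ((LinearMap.ker f.hom).mkQ t)) =
            Hσbar ((LinearMap.ker f.hom).mkQ t) :=
          ConcreteCategory.congr_hom (Injective.comp_factorThru Hσbar fbar)
            ((LinearMap.ker f.hom).mkQ t)
        exact h2
      obtain ⟨v, hv2⟩ := hX u
      let D : T ⟶ I₀ := H - (f ≫ v)
      have hD : ∀ t, D t = H t - v (f t) := fun t => rfl
      have hDπ : ∀ t, cokernel.π ι (D t) = 0 := by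
        intro t
        apply heinj
        rw [map_zero]
        show σ (D t) = 0
        rw [hD, map_sub]
        have h3 : σ (v (f t)) = u (f t) := ConcreteCategory.congr_hom hv2 (f t)
        rw [h3, hu, sub_self]
      have hrange : ∀ t, D t ∈ LinearMap.range ι.hom := fun t =>
        mem_range_of_cokernel_π_eq_zero ι (D t) (hDπ t)
      let φ : T ⟶ C₀ := factorRange ι hιinj D hrange
      have hφ0 : φ = 0 := zero_into_cogen hT hC₀F φ
      have hHfv : ∀ t, H t = v (f t) := by
        intro t
        have h4 := factorRange_spec ι hιinj D hrange t
        rw [show factorRange ι hιinj D hrange = φ from rfl, hφ0] at h4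
        have h5 : (0 : T ⟶ C₀) t = 0 := rfl
        rw [h5, map_zero] at h4
        have h7 := hD t
        rw [← h4] at h7
        exact sub_eq_zero.mp h7.symm
      apply ModuleCat.hom_ext; apply LinearMap.ext; intro z
      show h z = 0
      apply hιinj
      rw [map_zero, ← hH z, hHfv]
      have h6 : f (kernel.ι f z) = 0 :=
        ConcreteCategory.congr_hom (kernel.condition f) z
      rw [h6, map_zero]
    intro gmap
    exact zero_into_cogen hNC₀ hCmemC₀ gmap
end

section
/- Let Λ be the Kronecker algebra over an algebraically closed field k and let I, J ⊆ k be two infinite disjoint subsets. Then Hom_Λ(P(I), P(J)) = 0, where P(I) is the subrepresentation (V(I) ⇉ V(I)+k·1) of the generic representation (k(T) ⇉ k(T)). -/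
universe u

variable (k : Type u) [Field k]

/-- A representation of the Kronecker quiver `0 ⇉ 1`: two vector spaces and two
linear maps. -/
structure KronRep where
  V : Type u
  W : Type u
  [addV : AddCommGroup V]
  [addW : AddCommGroup W]
  [modV : Module k V]
  [modW : Module k W]
  a : V →ₗ[k] W
  b : V →ₗ[k] W

attribute [instance] KronRep.addV KronRep.addW KronRep.modV KronRep.modW

variable {k}

/-- A morphism of Kronecker representations. -/
@[ext]
structure KronHom (M N : KronRep k) where
  φ : M.V →ₗ[k] N.V
  ψ : M.W →ₗ[k] N.W
  comm_a : N.a.comp φ = ψ.comp M.a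
  comm_b : N.b.comp φ = ψ.comp M.b

/-- The zero morphism. -/
def KronHom.zero (M N : KronRep k) : KronHom M N :=
  ⟨0, 0, by simp, by simp⟩

/-- The identity morphism. -/
def KronHom.id (M : KronRep k) : KronHom M M :=
  ⟨LinearMap.id, LinearMap.id, by simp, by simp⟩

/-- `M` is the zero representation. -/
def KronRep.IsZeroRep (M : KronRep k) : Prop :=
  Subsingleton M.V ∧ Subsingleton M.W

/-- `M` is indecomposable: it is nonzero and its endomorphism ring has no nontrivial
idempotents. -/
def KronRep.Indecomposable (M : KronRep k) : Prop :=
  ¬ M.IsZeroRep ∧ ∀ e : KronHom M M,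
    e.φ.comp e.φ = e.φ → e.ψ.comp e.ψ = e.ψ → e = KronHom.zero M M ∨ e = KronHom.id M

/-- For Kronecker representations, the finite-dimensional indecomposable preprojective
modules are exactly the indecomposables of dimension vector `(n, n+1)`. -/
def KronRep.IsPreprojective (M : KronRep k) : Prop :=
  M.Indecomposable ∧ ∃ n : ℕ, Module.finrank k M.V = n ∧ Module.finrank k M.W = n + 1

variable (k)

/-- The subspace `V(I) ⊆ k(T)` spanned by the elements `1/(T - λ)`, `λ ∈ I`. -/
noncomputable def VI (I : Set k) : Submodule k (RatFunc k) :=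
  Submodule.span k ((fun l : k => (RatFunc.X - RatFunc.C l)⁻¹) '' I)

/-- The subspace `V(I) + k·1 ⊆ k(T)`. -/
noncomputable def WI (I : Set k) : Submodule k (RatFunc k) :=
  VI k I ⊔ Submodule.span k {1}

theorem mulX_mem (I : Set k) : ∀ v : RatFunc k, v ∈ VI k I →
    RatFunc.X * v ∈ WI k I := by
  intro v hv
  induction hv using Submodule.span_induction with
  | mem x hx =>
      obtain ⟨l, hl, rfl⟩ := hx
      have hne : (RatFunc.X - RatFunc.C l : RatFunc k) ≠ 0 := by
        have h1 : (RatFunc.X - RatFunc.C l : RatFunc k)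
            = algebraMap (Polynomial k) (RatFunc k) (Polynomial.X - Polynomial.C l) := by
          simp [RatFunc.algebraMap_X, RatFunc.algebraMap_C]
        rw [h1]
        exact RatFunc.algebraMap_ne_zero (Polynomial.X_sub_C_ne_zero l)
      have key : RatFunc.X * (RatFunc.X - RatFunc.C l)⁻¹
          = l • (RatFunc.X - RatFunc.C l)⁻¹ + 1 := by
        rw [Algebra.smul_def]
        field_simp
        rw [RatFunc.algebraMap_eq_C]; ring
      rw [key]
      refine add_mem ?_ ?_
      · exact Submodule.mem_sup_left (Submodule.smul_mem _ _
          (Submodule.subset_span ⟨l, hl, rfl⟩))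
      · exact Submodule.mem_sup_right (Submodule.subset_span rfl)
  | zero => simpa using (WI k I).zero_mem
  | add x y hx hy ihx ihy => simpa [mul_add] using add_mem ihx ihy
  | smul c x hx ih => simpa [Algebra.mul_smul_comm] using (WI k I).smul_mem c ih

/-- Ringel's representation `P(I)`: the subrepresentation `(V(I) ⇉ V(I) + k·1)` of the
generic representation `(k(T) ⇉ k(T))`, whose maps are the inclusion and
multiplication by `T`. -/
noncomputable def Prep (I : Set k) : KronRep k where
  V := VI k I
  W := WI k I
  a := Submodule.inclusion le_sup_left
  b := LinearMap.codRestrict (WI k I)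
    ((LinearMap.mulLeft k (RatFunc.X : RatFunc k)).comp (VI k I).subtype)
    (fun v => mulX_mem k I v v.2)


namespace RingelAux

variable {k : Type u} [Field k]

lemma eval2_id (p : Polynomial k) (a : k) : p.eval₂ (RingHom.id k) a = p.eval a := by
  rw [Polynomial.eval₂_eq_eval_map, Polynomial.map_id]

/-- The submodule of rational functions with no pole at `l`. -/
noncomputable def noPole (l : k) : Submodule k (RatFunc k) where
  carrier := {f | (RatFunc.denom f).eval l ≠ 0}
  zero_mem' := by simp [RatFunc.denom_zero]
  add_mem' := by
    intro x y hx hy h0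
    have := Polynomial.eval_eq_zero_of_dvd_of_eval_eq_zero (RatFunc.denom_add_dvd x y) h0
    rw [Polynomial.eval_mul] at this
    rcases mul_eq_zero.mp this with h | h
    · exact hx h
    · exact hy h
  smul_mem' := by
    intro c x hx h0
    rw [RatFunc.smul_eq_C_mul] at h0
    have := Polynomial.eval_eq_zero_of_dvd_of_eval_eq_zero (RatFunc.denom_mul_dvd _ x) h0
    rw [Polynomial.eval_mul, RatFunc.denom_C, Polynomial.eval_one, one_mul] at this
    exact hx this

lemma mem_noPole_iff (l : k) (f : RatFunc k) :
    f ∈ noPole l ↔ (RatFunc.denom f).eval l ≠ 0 := Iff.rfl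

lemma inv_X_sub_C_eq (m : k) :
    ((RatFunc.X - RatFunc.C m)⁻¹ : RatFunc k)
      = algebraMap (Polynomial k) (RatFunc k) 1 /
        algebraMap (Polynomial k) (RatFunc k) (Polynomial.X - Polynomial.C m) := by
  rw [map_one, map_sub, RatFunc.algebraMap_X, RatFunc.algebraMap_C, one_div]

lemma WI_le_noPole (J : Set k) (l : k) (hl : l ∉ J) : WI k J ≤ noPole l := by
  rw [WI]
  apply sup_le
  · rw [VI]
    apply Submodule.span_le.mpr
    rintro _ ⟨m, hm, rfl⟩
    have hml : m ≠ l := fun h => hl (h ▸ hm)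
    rw [SetLike.mem_coe, mem_noPole_iff]
    intro h0
    have hdvd : RatFunc.denom ((RatFunc.X - RatFunc.C m)⁻¹ : RatFunc k)
        ∣ (Polynomial.X - Polynomial.C m) := by
      rw [inv_X_sub_C_eq]
      exact RatFunc.denom_div_dvd 1 _
    have := Polynomial.eval_eq_zero_of_dvd_of_eval_eq_zero hdvd h0
    simp only [Polynomial.eval_sub, Polynomial.eval_X, Polynomial.eval_C, sub_eq_zero] at this
    exact hml this.symm
  · apply Submodule.span_le.mpr
    rintro _ rfl
    rw [SetLike.mem_coe, mem_noPole_iff, RatFunc.denom_one]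
    simp

lemma X_sub_C_ne_zero' (l : k) : (RatFunc.X - RatFunc.C l : RatFunc k) ≠ 0 := by
  have h1 : (RatFunc.X - RatFunc.C l : RatFunc k)
      = algebraMap (Polynomial k) (RatFunc k) (Polynomial.X - Polynomial.C l) := by
    simp [RatFunc.algebraMap_X, RatFunc.algebraMap_C]
  rw [h1]
  exact RatFunc.algebraMap_ne_zero (Polynomial.X_sub_C_ne_zero l)

lemma denom_X_sub_C (l : k) :
    RatFunc.denom (RatFunc.X - RatFunc.C l : RatFunc k) = 1 := by
  have h1 : (RatFunc.X - RatFunc.C l : RatFunc k)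
      = algebraMap (Polynomial k) (RatFunc k) (Polynomial.X - Polynomial.C l) := by
    simp [RatFunc.algebraMap_X, RatFunc.algebraMap_C]
  rw [h1, RatFunc.denom_algebraMap]

end RingelAux

/-- If `I, J ⊆ k` are infinite disjoint subsets, then every homomorphism of Kronecker
representations `P(I) → P(J)` is zero. -/
theorem hom_Prep_Prep_eq_zero_of_infinite_disjoint
    [IsAlgClosed k] (I J : Set k) (hI : I.Infinite) (hJ : J.Infinite)
    (hdisj : Disjoint I J) :
    ∀ f : KronHom (Prep k I) (Prep k J), f = KronHom.zero _ _ := by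
  classical
  intro f
  have h1W : ∀ (S : Set k), (1 : RatFunc k) ∈ WI k S := fun S =>
    Submodule.mem_sup_right (Submodule.subset_span rfl)
  set oneI : (Prep k I).W := ⟨1, h1W I⟩ with honeI
  set g : RatFunc k := (f.ψ oneI).val with hg
  have hgW : g ∈ WI k J := ((f.ψ oneI : WI k J)).2
  -- ψ extends φ
  have hext : ∀ v : VI k I, (f.φ v).val
      = (f.ψ ((Prep k I).a v)).val := by
    intro v
    exact congrArg (fun (F : (Prep k I).V →ₗ[k] (Prep k J).W) => (F v).val) f.comm_a
  -- the key relation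
  have hkey : ∀ (l : k) (hl : l ∈ I), (RatFunc.X - RatFunc.C l) *
      (f.φ ⟨(RatFunc.X - RatFunc.C l)⁻¹,
        Submodule.subset_span ⟨l, hl, rfl⟩⟩).val = g := by
    intro l hl
    set vl : VI k I := ⟨(RatFunc.X - RatFunc.C l)⁻¹, Submodule.subset_span ⟨l, hl, rfl⟩⟩
    have hbv : (Prep k I).b vl = l • ((Prep k I).a vl) + oneI := by
      apply Subtype.ext
      show RatFunc.X * (RatFunc.X - RatFunc.C l)⁻¹
          = l • ((RatFunc.X - RatFunc.C l)⁻¹ : RatFunc k) + 1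
      rw [Algebra.smul_def]
      have hne := RingelAux.X_sub_C_ne_zero' (k := k) l
      field_simp
      rw [RatFunc.algebraMap_eq_C]; ring
    have hcb : ((Prep k J).b (f.φ vl)).val = (f.ψ ((Prep k I).b vl)).val :=
      congrArg (fun (F : (Prep k I).V →ₗ[k] (Prep k J).W) => (F vl).val) f.comm_b
    -- LHS of hcb : b_J (φ vl) = X * (φ vl).val
    have hL : ((Prep k J).b (f.φ vl)).val
        = RatFunc.X * (f.φ vl).val := rfl
    have hR : (f.ψ ((Prep k I).b vl)).val
        = l • (f.φ vl).val + g := by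
      rw [hbv, map_add, map_smul]
      show l • (f.ψ ((Prep k I).a vl)).val + (f.ψ oneI).val = _
      rw [← hext vl, hg]
    rw [hL, hR] at hcb
    have : (RatFunc.X - RatFunc.C l) * (f.φ vl).val
        = RatFunc.X * (f.φ vl).val
          - l • (f.φ vl).val := by
      rw [Algebra.smul_def, sub_mul]
      rfl
    rw [this, hcb]
    ring
  -- evaluate to show g = 0
  have hg0 : g = 0 := by
    rw [← RatFunc.num_eq_zero_iff]
    apply Polynomial.eq_zero_of_infinite_isRoot
    apply Set.Infinite.mono _ hI
    intro l hl
    have hlJ : l ∉ J := fun h => (Set.disjoint_left.mp hdisj hl) h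
    set w : RatFunc k := (f.φ ⟨(RatFunc.X - RatFunc.C l)⁻¹,
        Submodule.subset_span ⟨l, hl, rfl⟩⟩).val with hw
    have hwW : w ∈ WI k J := le_sup_left (α := Submodule k (RatFunc k))
      (f.φ ⟨(RatFunc.X - RatFunc.C l)⁻¹, Submodule.subset_span ⟨l, hl, rfl⟩⟩).property
    have hwnp : (RatFunc.denom w).eval l ≠ 0 := RingelAux.WI_le_noPole J l hlJ hwW
    have hgnp : (RatFunc.denom g).eval l ≠ 0 := RingelAux.WI_le_noPole J l hlJ hgW
    have heval : RatFunc.eval (RingHom.id k) l g = 0 := by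
      rw [← hkey l hl]
      rw [RatFunc.eval_mul]
      · have : RatFunc.eval (RingHom.id k) l (RatFunc.X - RatFunc.C l) = 0 := by
          have := RatFunc.eval_add (f := RingHom.id k) (a := l)
            (x := (RatFunc.X : RatFunc k)) (y := -RatFunc.C l) ?_ ?_
          · rw [← sub_eq_add_neg] at this
            rw [this, RatFunc.eval_X]
            have hC : RatFunc.eval (RingHom.id k) l (-RatFunc.C l) = -l := by
              have h2 : (-RatFunc.C l : RatFunc k) = RatFunc.C (-l) := by rw [map_neg]
              rw [h2, RatFunc.eval_C]; rfl
            rw [hC]; ring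
          · rw [RingelAux.eval2_id, RatFunc.denom_X]; simp
          · rw [RingelAux.eval2_id]
            have h2 : (-RatFunc.C l : RatFunc k) = RatFunc.C (-l) := by rw [map_neg]
            rw [h2, RatFunc.denom_C]; simp
        rw [this, zero_mul]
      · rw [RingelAux.eval2_id, RingelAux.denom_X_sub_C]; simp
      · rw [RingelAux.eval2_id]; exact hwnp
    rw [RatFunc.eval, RingelAux.eval2_id, RingelAux.eval2_id,
      div_eq_zero_iff] at heval
    rcases heval with h | h
    · exact h
    · exact absurd h hgnp
  -- φ vanishes on generators
  have hφgen : ∀ l ∈ I, ∀ (h : ((RatFunc.X - RatFunc.C l)⁻¹ : RatFunc k) ∈ VI k I),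
      f.φ ⟨(RatFunc.X - RatFunc.C l)⁻¹, h⟩ = 0 := by
    intro l hl h
    have hk := hkey l hl
    rw [hg0] at hk
    rcases mul_eq_zero.mp hk with h1 | h1
    · exact absurd h1 (RingelAux.X_sub_C_ne_zero' l)
    · apply Subtype.ext
      exact h1
  -- φ = 0
  have hφ : f.φ = 0 := by
    apply LinearMap.ext
    intro x
    obtain ⟨xv, hxv⟩ := x
    show f.φ ⟨xv, hxv⟩ = 0
    induction hxv using Submodule.span_induction with
    | mem y hy =>
        obtain ⟨l, hl, rfl⟩ := hy
        exact hφgen l hl _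
    | zero => exact map_zero f.φ
    | add a b ha hb iha ihb =>
        have : (⟨a + b, Submodule.add_mem _ ha hb⟩ : VI k I)
            = ⟨a, ha⟩ + ⟨b, hb⟩ := rfl
        rw [this]
        exact (map_add f.φ _ _).trans ((congrArg₂ (· + ·) iha ihb).trans (add_zero 0))
    | smul c a ha iha =>
        have : (⟨c • a, Submodule.smul_mem _ c ha⟩ : VI k I)
            = c • ⟨a, ha⟩ := rfl
        rw [this]
        exact (map_smul f.φ c _).trans ((congrArg (c • ·) iha).trans (smul_zero c))
  -- ψ = 0
  have hψ : f.ψ = 0 := by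
    apply LinearMap.ext
    intro x
    obtain ⟨xv, hxv⟩ := x
    show f.ψ ⟨xv, hxv⟩ = 0
    have hxv' := hxv
    rw [WI] at hxv'
    obtain ⟨v, hv, s, hs, hvs⟩ := Submodule.mem_sup.mp hxv'
    obtain ⟨c, rfl⟩ := Submodule.mem_span_singleton.mp hs
    have hx : (⟨xv, hxv⟩ : WI k I)
        = (Prep k I).a (⟨v, hv⟩ : VI k I) + c • oneI := by
      apply Subtype.ext
      show xv = v + c • (1 : RatFunc k)
      rw [← hvs]
    rw [hx, map_add, map_smul]
    have h1 : f.ψ ((Prep k I).a (⟨v, hv⟩ : VI k I)) = 0 := by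
      apply Subtype.ext
      rw [← hext ⟨v, hv⟩, hφ]
      rfl
    have h2 : f.ψ oneI = 0 := by
      apply Subtype.ext
      exact hg0
    rw [h1, h2, smul_zero, add_zero]
  cases f with
  | mk φ ψ ca cb =>
      simp only at hφ hψ
      subst hφ
      subst hψ
      rfl
end

section
/- Let R be a ring and let C be a cotilting module of injective dimension at most one, i.e. Cogen(C) = {}^{⊥1}C. Let 0 → C1 → C0 → E(R) → 0 be a minimal approximation sequence of an injective cogenerator with C0, C1 ∈ Prod(C), and suppose the module C0 is itself cotilting. If moreover C is a minimal cosilting module (so that beta(Cogen C) is closed under products and Hom(C0,C1)=0), then C1 = 0. -/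
open CategoryTheory CategoryTheory.Limits

universe u

variable {R : Type u} [Ring R]

/-- `Ext¹(X, C) = 0`: every short exact sequence `0 → C → E → X → 0` splits. -/
def Ext1Vanishes (X C : ModuleCat.{u} R) : Prop :=
  ∀ ⦃E : ModuleCat.{u} R⦄ (i : C ⟶ E) (p : E ⟶ X) (w : i ≫ p = 0),
    (ShortComplex.mk i p w).ShortExact → ∃ r : E ⟶ C, i ≫ r = 𝟙 C

/-- `C` is a cotilting module of injective dimension at most one:
`Cogen C = {}^{⊥₁}C`. -/
def IsCotilting (C : ModuleCat.{u} R) : Prop :=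
  Cogen C = {X | Ext1Vanishes X C}

/-- Build a short exact sequence in `ModuleCat` from concrete data. -/
lemma myMkShortExact {X Y Z : ModuleCat.{u} R} (f : X ⟶ Y) (g : Y ⟶ Z) (w : f ≫ g = 0)
    (hinj : Function.Injective f) (hsurj : Function.Surjective g)
    (hex : ∀ y : Y, g y = 0 → ∃ x, f x = y) :
    (ShortComplex.mk f g w).ShortExact := by
  have h1 : Mono f := (ModuleCat.mono_iff_injective f).2 hinj
  have h2 : Epi g := (ModuleCat.epi_iff_surjective g).2 hsurj
  exact ⟨(ShortComplex.moduleCat_exact_iff _).2 hex⟩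

/-- From a section of `g`, build a retraction of `f`. -/
lemma myRetraction {S : ShortComplex (ModuleCat.{u} R)} (hse : S.ShortExact)
    (σ : S.X₃ ⟶ S.X₂) (hσ : σ ≫ S.g = 𝟙 S.X₃) : ∃ r : S.X₂ ⟶ S.X₁, S.f ≫ r = 𝟙 S.X₁ :=
  ⟨(ShortComplex.Splitting.ofExactOfSection S hse.exact σ hσ hse.mono_f).r,
    (ShortComplex.Splitting.ofExactOfSection S hse.exact σ hσ hse.mono_f).f_r⟩

/-- Pushout of a short exact sequence along `v : Y ⟶ P`. -/
lemma myPushout {Y Z X P : ModuleCat.{u} R} {a : Y ⟶ Z} {b : Z ⟶ X} {w : a ≫ b = 0}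
    (hse : (ShortComplex.mk a b w).ShortExact) (v : Y ⟶ P) :
    ∃ (Z' : ModuleCat.{u} R) (i' : P ⟶ Z') (p' : Z' ⟶ X) (w' : i' ≫ p' = 0)
      (j' : Z ⟶ Z'), (ShortComplex.mk i' p' w').ShortExact ∧
      a ≫ j' = v ≫ i' ∧ j' ≫ p' = b := by
  have hainj : Function.Injective a := hse.moduleCat_injective_f
  have hbsurj : Function.Surjective b := hse.moduleCat_surjective_g
  have hexact : ∀ z : Z, b z = 0 → ∃ y, a y = z :=
    (ShortComplex.moduleCat_exact_iff _).1 hse.exact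
  have hba : ∀ y : Y, b (a y) = 0 := fun y => by
    have := congrArg (fun φ : Y ⟶ X => φ y) w; simpa using this
  classical
  set W : Submodule R (P × Z) := LinearMap.range (LinearMap.prod v.hom
    (-a.hom)) with hW
  have memW : ∀ y : Y, ((v y, -(a y)) : P × Z) ∈ W := fun y => ⟨y, rfl⟩
  let Z' : ModuleCat.{u} R := ModuleCat.of R ((P × Z) ⧸ W)
  let i' : P ⟶ Z' := ModuleCat.ofHom (W.mkQ.comp (LinearMap.inl R P Z))
  let j' : Z ⟶ Z' := ModuleCat.ofHom (W.mkQ.comp (LinearMap.inr R P Z))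
  have hWker : W ≤ LinearMap.ker (b.hom.comp (LinearMap.snd R P Z)) := by
    rintro ⟨c, z⟩ ⟨y, hy⟩
    simp only [LinearMap.prod_apply, Pi.prod, Prod.mk.injEq, Prod.ext_iff] at hy
    obtain ⟨h1, h2⟩ := hy
    have hz : b z = 0 := by
      rw [← h2]
      show b (-(a y)) = 0
      rw [map_neg, hba, neg_zero]
    simpa [LinearMap.mem_ker] using hz
  let p' : Z' ⟶ X := ModuleCat.ofHom (W.liftQ (b.hom.comp (LinearMap.snd R P Z)) hWker)
  have hp'mk : ∀ cz : P × Z, p' (Submodule.Quotient.mk cz) = b cz.2 := fun cz =>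
    Submodule.liftQ_apply _ _ _
  have hw' : i' ≫ p' = 0 := by
    apply ModuleCat.hom_ext; apply LinearMap.ext
    intro c
    show p' (Submodule.Quotient.mk ((c : P), (0 : Z))) = 0
    rw [hp'mk]
    exact map_zero b.hom
  refine ⟨Z', i', p', hw', j', ?_, ?_, ?_⟩
  · apply myMkShortExact
    · intro c₁ c₂ h
      have h0 : (Submodule.Quotient.mk (((c₁, 0) : P × Z) - (c₂, 0)) : (P × Z) ⧸ W) = 0 := by
        rw [Submodule.Quotient.mk_sub]
        show i' c₁ - i' c₂ = 0
        rw [h, sub_self]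
      rw [Submodule.Quotient.mk_eq_zero] at h0
      obtain ⟨y, hy⟩ := h0
      simp only [LinearMap.prod_apply, Pi.prod, LinearMap.neg_apply, Prod.mk_sub_mk, sub_zero,
        Prod.mk.injEq, Prod.ext_iff] at hy
      obtain ⟨h1, h2⟩ := hy
      have ha0 : a y = 0 := neg_eq_zero.mp h2
      have hy0 : y = 0 := hainj (ha0.trans (map_zero a.hom).symm)
      simp only [hy0, Function.prod, map_zero] at h1
      exact sub_eq_zero.1 h1.symm
    · intro x
      obtain ⟨z, hz⟩ := hbsurj x
      exact ⟨Submodule.Quotient.mk (0, z), by rw [hp'mk]; exact hz⟩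
    · intro q hq
      obtain ⟨⟨c, z⟩, rfl⟩ := Submodule.Quotient.mk_surjective W q
      have hbz : b z = 0 := by rw [hp'mk] at hq; exact hq
      obtain ⟨y, hy⟩ := hexact z hbz
      refine ⟨c + v y, ?_⟩
      show (Submodule.Quotient.mk ((c + v y, 0) : P × Z) : (P × Z) ⧸ W) =
        Submodule.Quotient.mk (c, z)
      rw [Submodule.Quotient.eq]
      have : ((c + v y, 0) : P × Z) - (c, z) = (v y, -(a y)) := by
        rw [← hy]; ext <;> simp
      rw [this]
      exact memW y
  · apply ModuleCat.hom_ext; apply LinearMap.ext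
    intro y
    show (Submodule.Quotient.mk ((0 : P), a y) : (P × Z) ⧸ W) = Submodule.Quotient.mk (v y, 0)
    rw [Submodule.Quotient.eq]
    have : (((0 : P), a y) : P × Z) - (v y, 0) = -(v y, -(a y)) := by ext <;> simp
    rw [this]
    exact neg_mem (memW y)
  · apply ModuleCat.hom_ext; apply LinearMap.ext
    intro z
    show p' (Submodule.Quotient.mk ((0 : P), z)) = b z
    rw [hp'mk]

lemma ext1_pi {X Cm : ModuleCat.{u} R} (h : Ext1Vanishes X Cm) (s : Type u) :
    Ext1Vanishes X (ModuleCat.of R (s → Cm)) := by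
  intro Z i p w hse
  choose Zt it pt wt jt hset hrel1 hrel2 using fun t : s =>
    myPushout (P := Cm) hse (ModuleCat.ofHom (LinearMap.proj t : (s → Cm) →ₗ[R] Cm))
  choose ρ hρ using fun t : s => h (it t) (pt t) (wt t) (hset t)
  refine ⟨ModuleCat.ofHom (LinearMap.pi fun t => (jt t ≫ ρ t).hom), ?_⟩
  apply ModuleCat.hom_ext; apply LinearMap.ext
  intro y
  show LinearMap.pi (fun t => (jt t ≫ ρ t).hom) (i y) = y
  funext t
  rw [LinearMap.pi_apply]
  show ρ t (jt t (i y)) = y t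
  have e1 : jt t (i y) = it t (y t) := by
    have := congrArg (fun φ : ModuleCat.of R (s → Cm) ⟶ Zt t => φ y) (hrel1 t)
    simpa using this
  rw [e1]
  have e2 := congrArg (fun φ : Cm ⟶ Cm => φ (y t)) (hρ t)
  simpa using e2

lemma ext1_summand {X P Y : ModuleCat.{u} R} (h : Ext1Vanishes X P)
    (f₁ : Y ⟶ P) (r₁ : P ⟶ Y) (hfr : f₁ ≫ r₁ = 𝟙 Y) : Ext1Vanishes X Y := by
  intro Z i p w hse
  obtain ⟨Z', i', p', w', j', hse', hrel1, hrel2⟩ := myPushout hse f₁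
  obtain ⟨ρ, hρ⟩ := h i' p' w' hse'
  refine ⟨j' ≫ ρ ≫ r₁, ?_⟩
  calc i ≫ j' ≫ ρ ≫ r₁ = (i ≫ j') ≫ ρ ≫ r₁ := by rw [Category.assoc]
    _ = (f₁ ≫ i') ≫ ρ ≫ r₁ := by rw [hrel1]
    _ = f₁ ≫ (i' ≫ ρ) ≫ r₁ := by simp only [Category.assoc]
    _ = f₁ ≫ 𝟙 P ≫ r₁ := by rw [hρ]
    _ = 𝟙 Y := by rw [Category.id_comp, hfr]

lemma myLift {A Z B W : ModuleCat.{u} R} {a : A ⟶ Z} {b : Z ⟶ B} {w0 : a ≫ b = 0}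
    (hse : (ShortComplex.mk a b w0).ShortExact) (hext : Ext1Vanishes W A) (wm : W ⟶ B) :
    ∃ h : W ⟶ Z, h ≫ b = wm := by
  have hainj : Function.Injective a := hse.moduleCat_injective_f
  have hbsurj : Function.Surjective b := hse.moduleCat_surjective_g
  have hexact : ∀ z : Z, b z = 0 → ∃ x, a x = z :=
    (ShortComplex.moduleCat_exact_iff _).1 hse.exact
  have hba : ∀ x : A, b (a x) = 0 := fun x => by
    have := congrArg (fun φ : A ⟶ B => φ x) w0; simpa using this
  classical
  set M : Submodule R (Z × W) :=
    LinearMap.ker ((b.hom.comp (LinearMap.fst R Z W)) -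
      (wm.hom.comp (LinearMap.snd R Z W))) with hM
  have memM : ∀ zw : Z × W, zw ∈ M ↔ b zw.1 = wm zw.2 := by
    intro zw
    rw [hM, LinearMap.mem_ker, LinearMap.sub_apply]
    constructor
    · intro hz; exact sub_eq_zero.1 hz
    · intro hz; rw [sub_eq_zero]; exact hz
  let ZW : ModuleCat.{u} R := ModuleCat.of R M
  let iA : A ⟶ ZW := ModuleCat.ofHom (LinearMap.codRestrict M
    (LinearMap.prod a.hom 0)
    (fun x => by rw [memM]; show b (a x) = wm 0; rw [hba, map_zero]))
  let pW : ZW ⟶ W := ModuleCat.ofHom ((LinearMap.snd R Z W).comp M.subtype)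
  let q : ZW ⟶ Z := ModuleCat.ofHom ((LinearMap.fst R Z W).comp M.subtype)
  have w1 : iA ≫ pW = 0 := by
    apply ModuleCat.hom_ext; apply LinearMap.ext; intro x; rfl
  have hse' : (ShortComplex.mk iA pW w1).ShortExact := by
    apply myMkShortExact
    · intro x₁ x₂ hx
      have : a x₁ = a x₂ := congrArg (fun m : M => m.1.1) hx
      exact hainj this
    · intro w'
      obtain ⟨z, hz⟩ := hbsurj (wm w')
      exact ⟨⟨(z, w'), (memM _).2 hz⟩, rfl⟩
    · rintro ⟨⟨z, w'⟩, hm⟩ hw'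
      have hw0 : w' = 0 := hw'
      have hbz : b z = 0 := by
        have := (memM _).1 hm
        rw [hw0, map_zero] at this
        exact this
      obtain ⟨x, hx⟩ := hexact z hbz
      refine ⟨x, ?_⟩
      apply Subtype.ext
      show (a x, 0) = (z, w')
      rw [hw0, hx]
  obtain ⟨r, hr⟩ := hext iA pW w1 hse'
  have σdata := ShortComplex.Splitting.ofExactOfRetraction _ hse'.exact r hr hse'.epi_g
  have hσ : σdata.s ≫ pW = 𝟙 W := σdata.s_g
  have hqb : q ≫ b = pW ≫ wm := by
    apply ModuleCat.hom_ext; apply LinearMap.ext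
    rintro ⟨⟨z, w'⟩, hm⟩
    exact (memM _).1 hm
  refine ⟨σdata.s ≫ q, ?_⟩
  rw [Category.assoc, hqb, ← Category.assoc, hσ, Category.id_comp]

lemma cogen_self (C : ModuleCat.{u} R) : C ∈ Cogen C := by
  refine ⟨PUnit, ModuleCat.ofHom (LinearMap.pi fun _ => LinearMap.id), ?_⟩
  rw [ModuleCat.mono_iff_injective]
  intro x y h
  simpa using congrFun h PUnit.unit

lemma cogen_trans_s18 {A B X : ModuleCat.{u} R} (hX : X ∈ Cogen B) (hB : B ∈ Cogen A) :
    X ∈ Cogen A := by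
  obtain ⟨s, mX, hmX⟩ := hX
  obtain ⟨t, mB, hmB⟩ := hB
  let F : ModuleCat.of R (s → B) ⟶ ModuleCat.of R (s × t → A) :=
    ModuleCat.ofHom (LinearMap.pi fun p : s × t =>
      (LinearMap.proj p.2).comp (mB.hom.comp (LinearMap.proj p.1)))
  have hmBinj : Function.Injective mB := (ModuleCat.mono_iff_injective mB).1 hmB
  have hF : Mono F := by
    rw [ModuleCat.mono_iff_injective]
    intro v₁ v₂ hv
    funext p1
    apply hmBinj
    funext p2
    exact congrFun hv (p1, p2)
  haveI := hmX
  haveI := hF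
  exact ⟨s × t, mX ≫ F, inferInstance⟩

/-- Let `C` be a cotilting module with minimal approximation sequence
`0 → C₁ → C₀ → E → 0` of an injective cogenerator `E`, with `C₀, C₁ ∈ Prod C`.
If `C₀` is cotilting and `C` is a minimal cosilting module (i.e. `beta (Cogen C)` is
closed under products and `Hom(C₀, C₁) = 0`), then `C₁ = 0`. -/
theorem C1_eq_zero_of_minimal
    (C E C₀ C₁ : ModuleCat.{u} R)
    (hC : IsCotilting C) (hE : IsInjectiveCogenerator E)
    (g : C₀ ⟶ E) (hgepi : Epi g) (hC₀F : C₀ ∈ Cogen C)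
    (happrox : ∀ F ∈ Cogen C, ∀ f : F ⟶ E, ∃ h : F ⟶ C₀, h ≫ g = f)
    (hmin : ∀ s : C₀ ⟶ C₀, s ≫ g = g → IsIso s)
    (j : C₁ ⟶ C₀) (hj : Mono j) (hw : j ≫ g = 0)
    (hker : (ShortComplex.mk j g hw).Exact)
    (hC₀ : C₀ ∈ ProdCl C) (hC₁ : C₁ ∈ ProdCl C)
    (hC₀cotilt : IsCotilting C₀)
    -- `C` is a minimal cosilting module:
    (hprod : ∀ (s : Type u) (X : s → ModuleCat.{u} R),
      (∀ i, X i ∈ Cogen C ∩ Beta (Cogen C)) →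
        (∏ᶜ X) ∈ Cogen C ∩ Beta (Cogen C))
    (hhom : ∀ f : C₀ ⟶ C₁, f = 0) :
    Limits.IsZero C₁ := by
  classical
  haveI hjmono := hj
  haveI hEinj : Injective E := hE.1
  -- X ∈ Cogen C → Ext1Vanishes X C
  have hextC : ∀ X : ModuleCat.{u} R, X ∈ Cogen C → Ext1Vanishes X C := by
    intro X hX; rw [hC] at hX; exact hX
  -- Cogen C ⊆ Cogen C₀
  have hsub : ∀ X : ModuleCat.{u} R, X ∈ Cogen C → X ∈ Cogen C₀ := by
    intro X hX
    obtain ⟨s, f₀, r₀, hfr₀⟩ := hC₀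
    have h1 : Ext1Vanishes X (ModuleCat.of R (s → C)) := ext1_pi (hextC X hX) s
    have h2 : Ext1Vanishes X C₀ := ext1_summand h1 f₀ r₀ hfr₀
    rw [hC₀cotilt]
    exact h2
  -- Cogen C₀ ⊆ Cogen C
  have hsub' : ∀ X : ModuleCat.{u} R, X ∈ Cogen C₀ → X ∈ Cogen C := by
    intro X hX
    exact cogen_trans_s18 hX hC₀F
  -- Ext1Vanishes · C₀ from Cogen C₀
  have hextC₀ : ∀ X : ModuleCat.{u} R, X ∈ Cogen C₀ → Ext1Vanishes X C₀ := by
    intro X hX; rw [hC₀cotilt] at hX; exact hX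
  -- Step (H): C₀ ∈ Beta (Cogen C)
  have betaC₀ : C₀ ∈ Beta (Cogen C) := by
    intro F' hF' f
    apply hsub'
    rw [hC₀cotilt]
    intro Z a p w0 hse
    haveI := hse.mono_f
    have hainj : Function.Injective a := hse.moduleCat_injective_f
    -- lift the cokernel projection through p
    obtain ⟨h, hh⟩ := myLift hse (hextC₀ F' (hsub F' hF')) (cokernel.π f)
    -- ψ : C₀ ⟶ C₀ with ψ ≫ a = f ≫ h
    have hu : (f ≫ h) ≫ p = 0 := by
      rw [Category.assoc, hh, cokernel.condition]
    have hψ : hse.exact.lift (f ≫ h) hu ≫ a = f ≫ h := hse.exact.lift_f (f ≫ h) hu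
    set ψ : C₀ ⟶ C₀ := hse.exact.lift (f ≫ h) hu with hψdef
    -- ψ kills ker f
    have hψker : LinearMap.ker f.hom ≤ LinearMap.ker ψ.hom := by
      intro x hx
      rw [LinearMap.mem_ker] at hx ⊢
      apply hainj
      have := congrArg (fun φ : C₀ ⟶ Z => φ x) hψ
      simp only at this
      show a (ψ x) = a 0
      rw [map_zero]
      calc a (ψ x) = (ψ ≫ a) x := rfl
        _ = (f ≫ h) x := by rw [hψ]
        _ = h (f x) := rfl
        _ = h 0 := by rw [hx]
        _ = 0 := map_zero h.hom
    -- ψ' : range f →ₗ C₀ with ψ' (f x) = ψ x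
    let ψq : (C₀ ⧸ LinearMap.ker f.hom) →ₗ[R] C₀ :=
      Submodule.liftQ _ ψ.hom hψker
    let ψ' : (LinearMap.range f.hom) →ₗ[R] C₀ :=
      ψq.comp ((LinearMap.quotKerEquivRange f.hom).symm.toLinearMap)
    have hψ' : ∀ x : C₀, ψ' ⟨f x, LinearMap.mem_range_self _ x⟩ = ψ x := by
      intro x
      have : (LinearMap.quotKerEquivRange f.hom).symm
          ⟨f x, LinearMap.mem_range_self _ x⟩ =
          (LinearMap.ker f.hom).mkQ x :=
        LinearMap.quotKerEquivRange_symm_apply_image _ x _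
      show ψq ((LinearMap.quotKerEquivRange f.hom).symm
        ⟨f x, LinearMap.mem_range_self _ x⟩) = ψ x
      rw [this]
      exact Submodule.liftQ_apply _ _ _
    -- extend (ψ' ≫ g) over the inclusion range f ↪ F' using injectivity of E
    let ι : ModuleCat.of R (LinearMap.range f.hom) ⟶ F' :=
      ModuleCat.ofHom (LinearMap.range f.hom).subtype
    haveI hιmono : Mono ι := by
      rw [ModuleCat.mono_iff_injective]
      exact Subtype.val_injective
    let χ : F' ⟶ E := Injective.factorThru (ModuleCat.ofHom (g.hom.comp ψ')) ι
    have hχ : ι ≫ χ = ModuleCat.ofHom (g.hom.comp ψ') :=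
      Injective.comp_factorThru _ _
    have hfχ : f ≫ χ = ψ ≫ g := by
      apply ModuleCat.hom_ext; apply LinearMap.ext
      intro x
      show χ (f x) = g (ψ x)
      have : χ (ι ⟨f x, LinearMap.mem_range_self _ x⟩) =
          g (ψ' ⟨f x, LinearMap.mem_range_self _ x⟩) := by
        have := congrArg (fun φ => φ (⟨f x, LinearMap.mem_range_self _ x⟩ :
          LinearMap.range f.hom)) hχ
        simpa using this
      rw [show (f x : F') = ι ⟨f x, LinearMap.mem_range_self _ x⟩ from rfl] at *
      rw [this, hψ' x]
    -- lift χ through the approximation g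
    obtain ⟨χ', hχ'⟩ := happrox F' hF' χ
    -- δ factors through C₁, hence vanishes
    have hδ : (ψ - f ≫ χ') ≫ g = 0 := by
      rw [Preadditive.sub_comp, Category.assoc, hχ', hfχ, sub_self]
    have hε : hker.lift (ψ - f ≫ χ') hδ ≫ j = ψ - f ≫ χ' := hker.lift_f _ hδ
    have hε0 : hker.lift (ψ - f ≫ χ') hδ = 0 := hhom _
    have hψeq : ψ = f ≫ χ' := by
      have := hε
      rw [hε0, zero_comp] at this
      exact (sub_eq_zero.1 this.symm)
    -- corrected lift kills f, descends to the cokernel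
    have hfh' : f ≫ (h - χ' ≫ a) = 0 := by
      rw [Preadditive.comp_sub, ← Category.assoc, ← hψeq, hψ, sub_self]
    let σ : (cokernel f : ModuleCat.{u} R) ⟶ Z := cokernel.desc f (h - χ' ≫ a) hfh'
    have hσ : σ ≫ p = 𝟙 (cokernel f) := by
      rw [← cancel_epi (cokernel.π f)]
      rw [← Category.assoc, cokernel.π_desc, Preadditive.sub_comp, Category.assoc, hh]
      have hap : a ≫ p = 0 := w0
      rw [hap, comp_zero, sub_zero, Category.comp_id]
    exact myRetraction hse σ hσ
  -- Step (I): Hom(P, C₁) = 0 for P ∈ Cogen C ∩ Beta (Cogen C)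
  have homzero : ∀ (P : ModuleCat.{u} R), P ∈ Cogen C → P ∈ Beta (Cogen C) →
      ∀ u : P ⟶ C₁, u = 0 := by
    intro P hPF hPbeta u
    have hQ : cokernel (u ≫ j) ∈ Cogen C := hPbeta hC₀F (u ≫ j)
    have hcond : (u ≫ j) ≫ g = 0 := by rw [Category.assoc, hw, comp_zero]
    obtain ⟨lam, hlam⟩ := happrox (cokernel (u ≫ j)) hQ (cokernel.desc (u ≫ j) g hcond)
    have hcomp : (cokernel.π (u ≫ j) ≫ lam) ≫ g = g := by
      rw [Category.assoc, hlam, cokernel.π_desc]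
    haveI hiso : IsIso (cokernel.π (u ≫ j) ≫ lam) := hmin _ hcomp
    haveI : Mono (cokernel.π (u ≫ j) ≫ lam) := inferInstance
    haveI hπmono : Mono (cokernel.π (u ≫ j)) := mono_of_mono (cokernel.π (u ≫ j)) lam
    have huj : u ≫ j = 0 := by
      apply (cancel_mono (cokernel.π (u ≫ j))).1
      rw [cokernel.condition, zero_comp]
    apply (cancel_mono j).1
    rw [huj, zero_comp]
  -- Step (J): the universal embedding Δ : C₁ ⟶ P, P a product of copies of C₀
  -- C₁ ∈ Cogen C
  have hC₁F : C₁ ∈ Cogen C := by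
    obtain ⟨s₁, f₁, r₁, hfr₁⟩ := hC₁
    haveI : IsSplitMono f₁ := IsSplitMono.mk' ⟨r₁, hfr₁⟩
    exact ⟨s₁, f₁, inferInstance⟩
  let S : Type u := (C₁ ⟶ C₀)
  let P : ModuleCat.{u} R := ∏ᶜ (fun _ : S => C₀)
  have hPmem : P ∈ Cogen C ∩ Beta (Cogen C) :=
    hprod S (fun _ => C₀) (fun _ => ⟨hC₀F, betaC₀⟩)
  let Δ : C₁ ⟶ P := Pi.lift (fun ψ : S => (ψ : C₁ ⟶ C₀))
  have hliftπ : ∀ ψ : S, Δ ≫ Pi.π (fun _ : S => C₀) ψ = ψ := by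
    intro ψ
    exact Pi.lift_π _ ψ
  -- Δ is a monomorphism
  haveI hΔmono : Mono Δ := by
    obtain ⟨t, m₁, hm₁⟩ := hsub C₁ hC₁F
    let mb : t → S := fun b =>
      ModuleCat.ofHom ((LinearMap.proj b).comp m₁.hom)
    let κ : P ⟶ ModuleCat.of R (t → C₀) :=
      ModuleCat.ofHom (LinearMap.pi fun b : t =>
        (Pi.π (fun _ : S => C₀) (mb b)).hom)
    have hΔκ : Δ ≫ κ = m₁ := by
      apply ModuleCat.hom_ext; apply LinearMap.ext
      intro x
      show LinearMap.pi (fun b : t =>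
        (Pi.π (fun _ : S => C₀) (mb b)).hom) (Δ x) = m₁ x
      funext b
      rw [LinearMap.pi_apply]
      have := congrArg (fun φ : C₁ ⟶ C₀ => φ x) (hliftπ (mb b))
      exact this
    haveI : Mono (Δ ≫ κ) := by rw [hΔκ]; exact hm₁
    exact mono_of_mono Δ κ
  -- the cokernel sequence of Δ
  let D : ModuleCat.{u} R := cokernel Δ
  have sesD : (ShortComplex.mk Δ (cokernel.π Δ) (cokernel.condition Δ)).ShortExact := by
    refine ⟨?_⟩
    exact ShortComplex.exact_of_g_is_cokernel _ (cokernelIsCokernel Δ)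
  -- Step (K): Ext1Vanishes D C₀
  have extD : Ext1Vanishes D C₀ := by
    intro Z a p w0 hse
    haveI := hse.mono_f
    obtain ⟨h, hh⟩ := myLift hse (hextC₀ P (hsub P hPmem.1)) (cokernel.π Δ)
    have hu : (Δ ≫ h) ≫ p = 0 := by rw [Category.assoc, hh, cokernel.condition]
    have hψ₀ : hse.exact.lift (Δ ≫ h) hu ≫ a = Δ ≫ h := hse.exact.lift_f _ hu
    set ψ₀ : C₁ ⟶ C₀ := hse.exact.lift (Δ ≫ h) hu with hψ₀def
    have hΔh' : Δ ≫ (h - (Pi.π (fun _ : S => C₀) ψ₀) ≫ a) = 0 := by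
      rw [Preadditive.comp_sub, ← Category.assoc, hliftπ ψ₀, hψ₀, sub_self]
    have hh'p : (h - (Pi.π (fun _ : S => C₀) ψ₀) ≫ a) ≫ p = cokernel.π Δ := by
      have hap : a ≫ p = 0 := w0
      rw [Preadditive.sub_comp, hh, Category.assoc, hap, comp_zero, sub_zero]
    let σ : D ⟶ Z := cokernel.desc Δ (h - (Pi.π (fun _ : S => C₀) ψ₀) ≫ a) hΔh'
    have hσ : σ ≫ p = 𝟙 D := by
      rw [← cancel_epi (cokernel.π Δ), ← Category.assoc, cokernel.π_desc, hh'p,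
        Category.comp_id]
    exact myRetraction hse σ hσ
  -- Step (L): conclude
  have hDC₀ : D ∈ Cogen C₀ := by rw [hC₀cotilt]; exact extD
  have hDC : D ∈ Cogen C := hsub' D hDC₀
  have hDextC : Ext1Vanishes D C := hextC D hDC
  obtain ⟨s₂, f₂, r₂, hfr₂⟩ := hC₁
  have hDC₁ : Ext1Vanishes D C₁ := ext1_summand (ext1_pi hDextC s₂) f₂ r₂ hfr₂
  obtain ⟨τ, hτ⟩ := hDC₁ Δ (cokernel.π Δ) (cokernel.condition Δ) sesD
  have hτ0 : τ = 0 := homzero P hPmem.1 hPmem.2 τ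
  rw [Limits.IsZero.iff_id_eq_zero]
  rw [← hτ, hτ0, comp_zero]
end
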